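/- Let a > 0 and N > 0. For every nonnegative integer n, the polynomial y = C_n^{a,N} satisfies, for all real x, the difference equation N ∑_{i=0}^{n} A_i(x) Δ^i y(x) + x Δ∇y(x) + (a − x) Δy(x) + n y(x) = 0, where A_0 = (-1)^{n-1} C_{n-1}^{(a)}(-2) and, for 1 ≤ i ≤ n, A_i(x) = ∑_{k=1}^i (-1)^k C_{i-k}^{(-a)}(-x+1) [C_k^{(a)}(-1) C_k^{(a)}(x-2) − C_k^{(a)}(-2) C_k^{(a)}(x-1)]. -/

import Mathlib

/-- Generalized binomial coefficient `x(x-1)⋯(x-k+1)/k!`. -/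
noncomputable def genChoose (x : ℝ) (k : ℕ) : ℝ :=
  (∏ j ∈ Finset.range k, (x - (j : ℝ))) / (Nat.factorial k : ℝ)

/-- The Charlier polynomial `C_n^{(a)}(x) = ∑_{k=0}^n (x choose k) (-a)^{n-k}/(n-k)!`. -/
noncomputable def charlier (a : ℝ) (n : ℕ) (x : ℝ) : ℝ :=
  ∑ k ∈ Finset.range (n + 1),
    genChoose x k * (-a) ^ (n - k) / (Nat.factorial (n - k) : ℝ)

/-- Charlier polynomial with integer index, with the convention `C_{-1}^{(a)} ≡ 0`. -/
noncomputable def charlierZ (a : ℝ) (n : ℤ) (x : ℝ) : ℝ :=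
  if 0 ≤ n then charlier a n.toNat x else 0

/-- Forward difference operator `Δf(x) = f(x+1) - f(x)`. -/
def fdiff (f : ℝ → ℝ) : ℝ → ℝ := fun x => f (x + 1) - f x

/-- Backward difference operator `∇f(x) = f(x) - f(x-1)`. -/
def bdiff (f : ℝ → ℝ) : ℝ → ℝ := fun x => f x - f (x - 1)

/-- The generalized Charlier polynomial
`C_n^{a,N}(x) = [1 + N(-1)^n C_n^{(a)}(-1)] C_n^{(a)}(x) - N(-1)^n C_n^{(a)}(0) C_n^{(a)}(x-1)`. -/
noncomputable def genCharlier (a N : ℝ) (n : ℕ) (x : ℝ) : ℝ :=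
  (1 + N * (-1) ^ n * charlier a n (-1)) * charlier a n x
    - N * (-1) ^ n * charlier a n 0 * charlier a n (x - 1)

/-- The coefficient `A_i(x)` (for `i ≥ 1`) of the difference equation. -/
noncomputable def Acoef (a : ℝ) (i : ℕ) (x : ℝ) : ℝ :=
  ∑ k ∈ Finset.Icc 1 i, (-1 : ℝ) ^ k * charlier (-a) (i - k) (-x + 1) *
    (charlier a k (-1) * charlier a k (x - 2) - charlier a k (-2) * charlier a k (x - 1))

/-- The coefficient `A_0 = (-1)^{n-1} C_{n-1}^{(a)}(-2)` (with `C_{-1}^{(a)} ≡ 0`). -/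
noncomputable def A0coef (a : ℝ) (n : ℕ) : ℝ :=
  (-1 : ℝ) ^ ((n : ℤ) - 1) * charlierZ a ((n : ℤ) - 1) (-2)




lemma genChoose_zero (x : ℝ) : genChoose x 0 = 1 := by simp [genChoose]

lemma genChoose_pascal (x : ℝ) (k : ℕ) :
    genChoose (x + 1) (k + 1) = genChoose x (k + 1) + genChoose x k := by
  have h1 : ∏ j ∈ Finset.range (k+1), (x + 1 - (j : ℝ)) =
      (x + 1) * ∏ j ∈ Finset.range k, (x - (j : ℝ)) := by
    rw [Finset.prod_range_succ']
    rw [mul_comm]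
    congr 1
    · push_cast; ring
    · exact Finset.prod_congr rfl fun j _ => by push_cast; ring
  have h2 : ∏ j ∈ Finset.range (k+1), (x - (j : ℝ)) =
      (∏ j ∈ Finset.range k, (x - (j : ℝ))) * (x - k) := by
    rw [Finset.prod_range_succ]
  have hf : (Nat.factorial (k+1) : ℝ) = (k+1) * Nat.factorial k := by
    push_cast [Nat.factorial_succ]; ring
  have hfk : (Nat.factorial k : ℝ) ≠ 0 := by exact_mod_cast (Nat.factorial_pos k).ne'
  simp only [genChoose, h1, h2, hf]
  field_simp
  ring

lemma genChoose_nat_zero_succ (k : ℕ) : genChoose 0 (k + 1) = 0 := by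
  simp only [genChoose]
  rw [Finset.prod_eq_zero (Finset.mem_range.2 (Nat.succ_pos k))]
  · simp
  · simp

lemma genChoose_one_eval (k : ℕ) : genChoose 1 k = if k ≤ 1 then 1 else 0 := by
  match k with
  | 0 => simp [genChoose]
  | 1 => simp [genChoose]
  | (k+2) =>
    simp only [genChoose]
    rw [Finset.prod_eq_zero (show 1 ∈ Finset.range (k+2) by simp)]
    · simp
    · norm_num

lemma vand_nat (m : ℕ) : ∀ (y : ℝ) (n : ℕ), genChoose (m + y) n =
    ∑ k ∈ Finset.range (n + 1), genChoose (m : ℝ) k * genChoose y (n - k) := by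
  induction m with
  | zero =>
    intro y n
    rw [Finset.sum_range_succ']
    simp only [Nat.cast_zero, genChoose_nat_zero_succ, genChoose_zero, zero_mul,
      Finset.sum_const_zero, zero_add, one_mul, Nat.sub_zero]
  | succ m ih =>
    intro y n
    have hc : ((m + 1 : ℕ) : ℝ) + y = (m : ℝ) + y + 1 := by push_cast; ring
    match n with
    | 0 => simp [genChoose_zero]
    | (n+1) =>
      rw [hc, genChoose_pascal, ih y (n+1), ih y n]
      rw [Finset.sum_range_succ' (fun k => genChoose ((m+1:ℕ):ℝ) k * genChoose y (n + 1 - k))]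
      have hsplit : ∀ k ∈ Finset.range (n+1),
          genChoose ((m+1:ℕ):ℝ) (k+1) * genChoose y (n + 1 - (k+1)) =
          genChoose (m:ℝ) (k+1) * genChoose y (n - k) + genChoose (m:ℝ) k * genChoose y (n - k) := by
        intro k _
        have : ((m+1:ℕ):ℝ) = (m:ℝ) + 1 := by push_cast; ring
        rw [this, genChoose_pascal]
        have : n + 1 - (k+1) = n - k := by omega
        rw [this]; ring
      rw [Finset.sum_congr rfl hsplit, Finset.sum_add_distrib]
      rw [Finset.sum_range_succ' (fun k => genChoose (m:ℝ) k * genChoose y (n + 1 - k))]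
      have h0 : genChoose ((m+1:ℕ):ℝ) 0 = genChoose (m:ℝ) 0 := by
        simp [genChoose_zero]
      have hre : ∀ k ∈ Finset.range (n+1),
          genChoose (m:ℝ) (k+1) * genChoose y (n - k) =
          genChoose (m:ℝ) (k+1) * genChoose y (n + 1 - (k+1)) := by
        intro k _
        congr 2
        omega
      rw [Finset.sum_congr rfl hre, h0]
      ring

noncomputable def gcPoly (k : ℕ) : Polynomial ℝ :=
  Polynomial.C ((Nat.factorial k : ℝ))⁻¹ * ∏ j ∈ Finset.range k, (Polynomial.X - Polynomial.C (j : ℝ))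

lemma gcPoly_eval (k : ℕ) (x : ℝ) : (gcPoly k).eval x = genChoose x k := by
  simp only [gcPoly, genChoose, Polynomial.eval_mul, Polynomial.eval_C, Polynomial.eval_prod,
    Polynomial.eval_sub, Polynomial.eval_X]
  rw [div_eq_inv_mul]

lemma vand (x y : ℝ) (n : ℕ) : genChoose (x + y) n =
    ∑ k ∈ Finset.range (n + 1), genChoose x k * genChoose y (n - k) := by
  set p : Polynomial ℝ := (gcPoly n).comp (Polynomial.X + Polynomial.C y) -
    ∑ k ∈ Finset.range (n + 1), Polynomial.C (genChoose y (n - k)) * gcPoly k with hp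
  have heval : ∀ z : ℝ, p.eval z = genChoose (z + y) n -
      ∑ k ∈ Finset.range (n + 1), genChoose z k * genChoose y (n - k) := by
    intro z
    simp only [hp, Polynomial.eval_sub, Polynomial.eval_comp, Polynomial.eval_add,
      Polynomial.eval_X, Polynomial.eval_C, Polynomial.eval_finset_sum, Polynomial.eval_mul,
      gcPoly_eval]
    congr 1
    exact Finset.sum_congr rfl fun k _ => mul_comm _ _
  have hzero : p = 0 := by
    apply Polynomial.eq_zero_of_infinite_isRoot
    apply Set.infinite_of_injective_forall_mem (f := fun m : ℕ => (m : ℝ))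
      Nat.cast_injective
    intro m
    simp only [Set.mem_setOf_eq, Polynomial.IsRoot, heval, vand_nat m y n, sub_self]
  have := heval x
  rw [hzero] at this
  simp only [Polynomial.eval_zero] at this
  linarith

open PowerSeries

noncomputable def Gs (x : ℝ) : PowerSeries ℝ := PowerSeries.mk (genChoose x)
noncomputable def Es (a : ℝ) : PowerSeries ℝ :=
  PowerSeries.mk (fun m => (-a) ^ m / (Nat.factorial m : ℝ))

lemma coeff_GE (a x : ℝ) (n : ℕ) : (PowerSeries.coeff n) (Gs x * Es a) = charlier a n x := by
  rw [PowerSeries.coeff_mul, Finset.Nat.sum_antidiagonal_eq_sum_range_succ_mk]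
  simp only [Gs, Es, PowerSeries.coeff_mk, charlier]
  exact Finset.sum_congr rfl fun k _ => by rw [mul_div_assoc]

lemma Gs_add (x y : ℝ) : Gs (x + y) = Gs x * Gs y := by
  ext n
  rw [PowerSeries.coeff_mul, Finset.Nat.sum_antidiagonal_eq_sum_range_succ_mk]
  simp only [Gs, PowerSeries.coeff_mk]
  exact vand x y n

lemma Es_add (a b : ℝ) : Es (a + b) = Es a * Es b := by
  ext n
  rw [PowerSeries.coeff_mul, Finset.Nat.sum_antidiagonal_eq_sum_range_succ_mk]
  simp only [Es, PowerSeries.coeff_mk]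
  have hb : (-(a+b)) = (-a) + (-b) := by ring
  rw [hb, add_pow]
  rw [Finset.sum_div]
  refine Finset.sum_congr rfl fun k hk => ?_
  have hk' : k ≤ n := Nat.lt_succ_iff.1 (Finset.mem_range.1 hk)
  have hfac : (n.choose k : ℝ) / (Nat.factorial n : ℝ) =
      1 / ((Nat.factorial k : ℝ) * (Nat.factorial (n - k) : ℝ)) := by
    rw [div_eq_div_iff]
    · rw [one_mul]
      rw [← Nat.choose_mul_factorial_mul_factorial hk']
      push_cast; ring
    · exact_mod_cast (Nat.factorial_pos n).ne'
    · positivity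
  field_simp
  rw [div_eq_div_iff] at hfac
  · linear_combination ((-a)^k*(-b)^(n-k)) * hfac
  · exact_mod_cast (Nat.factorial_pos n).ne'
  · positivity

lemma Gs_zero : Gs 0 = 1 := by
  ext n
  match n with
  | 0 => simp [Gs, genChoose_zero]
  | (n+1) => simp [Gs, genChoose_nat_zero_succ]

lemma Es_zero : Es 0 = 1 := by
  ext n
  match n with
  | 0 => simp [Es]
  | (n+1) => simp [Es]

lemma Gs_one : Gs 1 = 1 + PowerSeries.X := by
  ext n
  match n with
  | 0 => simp [Gs, genChoose_one_eval]
  | 1 => simp [Gs, genChoose_one_eval]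
  | (n+2) => simp [Gs, genChoose_one_eval, PowerSeries.coeff_X]

lemma charlier_zero_n (a x : ℝ) : charlier a 0 x = 1 := by
  simp [charlier, genChoose_zero]

lemma charlier_fd (a : ℝ) (n : ℕ) (x : ℝ) :
    charlier a (n + 1) (x + 1) = charlier a (n + 1) x + charlier a n x := by
  have h : charlier a (n+1) (x+1) - charlier a (n+1) x = charlier a n x := by
    simp only [charlier]
    rw [← Finset.sum_sub_distrib]
    rw [Finset.sum_range_succ' (fun k => genChoose (x+1) k * (-a) ^ (n+1-k) / ↑(Nat.factorial (n+1-k)) -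
      genChoose x k * (-a) ^ (n+1-k) / ↑(Nat.factorial (n+1-k)))]
    simp only [genChoose_zero, sub_self, add_zero]
    refine Finset.sum_congr rfl fun k hk => ?_
    have h1 : n + 1 - (k+1) = n - k := by omega
    rw [genChoose_pascal, h1]
    ring
  linarith

lemma gc_absorb (x : ℝ) (k : ℕ) :
    ((k : ℝ) + 1) * genChoose x (k + 1) = x * genChoose (x - 1) k := by
  have h1 : ∏ j ∈ Finset.range (k+1), (x - (j : ℝ)) =
      (∏ j ∈ Finset.range k, (x - 1 - (j : ℝ))) * x := by
    rw [Finset.prod_range_succ']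
    simp only [Nat.cast_zero, sub_zero]
    congr 1
    exact Finset.prod_congr rfl fun j _ => by push_cast; ring
  have hf : (Nat.factorial (k+1) : ℝ) = ((k:ℝ)+1) * Nat.factorial k := by
    push_cast [Nat.factorial_succ]; ring
  have hfk : (Nat.factorial k : ℝ) ≠ 0 := by exact_mod_cast (Nat.factorial_pos k).ne'
  have hk1 : ((k:ℝ)+1) ≠ 0 := by positivity
  simp only [genChoose, h1, hf]
  field_simp

lemma charlier_struct (a : ℝ) (m : ℕ) (x : ℝ) :
    x * charlier a m (x - 1) = a * charlier a m x + ((m : ℝ) + 1) * charlier a (m + 1) x := by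
  have hT : ((m:ℝ)+1) * charlier a (m+1) x + a * charlier a m x =
      ∑ k ∈ Finset.range (m + 2), (k : ℝ) * genChoose x k * (-a) ^ (m + 1 - k) /
        (Nat.factorial (m + 1 - k) : ℝ) := by
    simp only [charlier, Finset.mul_sum]
    rw [Finset.sum_range_succ (fun k => (k:ℝ) * genChoose x k * (-a) ^ (m+1-k) / ↑(Nat.factorial (m+1-k)))]
    rw [Finset.sum_range_succ (fun k => ((m:ℝ)+1) * (genChoose x k * (-a) ^ (m+1-k) / ↑(Nat.factorial (m+1-k))))]
    simp only [Nat.sub_self, pow_zero, Nat.factorial_zero, Nat.cast_one]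
    have hmain : ∑ k ∈ Finset.range (m+1), ((((m:ℝ)+1) * (genChoose x k * (-a) ^ (m + 1 - k) / ↑(Nat.factorial (m + 1 - k)))) + a * (genChoose x k * (-a) ^ (m - k) / ↑(Nat.factorial (m - k)))) =
        ∑ k ∈ Finset.range (m+1), (k:ℝ) * genChoose x k * (-a) ^ (m + 1 - k) / ↑(Nat.factorial (m + 1 - k)) := by
      refine Finset.sum_congr rfl fun k hk => ?_
      have hk' : k ≤ m := Nat.lt_succ_iff.1 (Finset.mem_range.1 hk)
      have h1 : m + 1 - k = (m - k) + 1 := by omega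
      have h2 : (Nat.factorial (m+1-k) : ℝ) = ((m:ℝ) + 1 - k) * Nat.factorial (m-k) := by
        rw [h1, Nat.factorial_succ]
        push_cast [Nat.succ_sub hk']
        rw [Nat.cast_sub hk']
        ring
      have h3 : (-a) ^ (m+1-k) = (-a) * (-a) ^ (m-k) := by rw [h1]; ring
      have hne : ((m:ℝ) + 1 - k) ≠ 0 := by
        have : (k : ℝ) ≤ m := by exact_mod_cast hk'
        linarith
      have hfk : (Nat.factorial (m-k) : ℝ) ≠ 0 := by exact_mod_cast (Nat.factorial_pos (m-k)).ne'
      rw [h2, h3]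
      field_simp
      ring
    rw [Finset.sum_add_distrib] at hmain
    push_cast
    push_cast at hmain
    linarith [hmain]
  have hL : x * charlier a m (x-1) =
      ∑ k ∈ Finset.range (m + 2), (k : ℝ) * genChoose x k * (-a) ^ (m + 1 - k) /
        (Nat.factorial (m + 1 - k) : ℝ) := by
    rw [Finset.sum_range_succ' (fun k => (k:ℝ) * genChoose x k * (-a) ^ (m+1-k) / ↑(Nat.factorial (m+1-k)))]
    simp only [Nat.cast_zero, zero_mul, zero_div, add_zero]
    simp only [charlier, Finset.mul_sum]
    refine Finset.sum_congr rfl fun k hk => ?_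
    have h1 : m + 1 - (k+1) = m - k := by omega
    rw [h1]
    have := gc_absorb x k
    push_cast
    calc x * (genChoose (x-1) k * (-a) ^ (m-k) / ↑(Nat.factorial (m-k)))
        = (x * genChoose (x-1) k) * (-a) ^ (m-k) / ↑(Nat.factorial (m-k)) := by ring
      _ = (((k:ℝ)+1) * genChoose x (k+1)) * (-a) ^ (m-k) / ↑(Nat.factorial (m-k)) := by rw [this]
      _ = ((k:ℝ)+1) * genChoose x (k+1) * (-a) ^ (m-k) / ↑(Nat.factorial (m-k)) := by ring
  rw [hL, ← hT]
  ring

noncomputable def Dcoef (a x : ℝ) (k : ℕ) : ℝ :=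
  (-1 : ℝ) ^ k * (charlier a k (-1) * charlier a k (x - 2) - charlier a k (-2) * charlier a k (x - 1))

noncomputable def Dser (a x : ℝ) : PowerSeries ℝ := PowerSeries.mk (Dcoef a x)

lemma Dcoef_zero (a x : ℝ) : Dcoef a x 0 = 0 := by
  simp [Dcoef, charlier_zero_n]

lemma Acoef_eq (a x : ℝ) (i : ℕ) :
    Acoef a i x = PowerSeries.coeff i (Dser a x * (Gs (1 - x) * Es (-a))) := by
  rw [PowerSeries.coeff_mul, Finset.Nat.sum_antidiagonal_eq_sum_range_succ_mk]
  simp only [Dser, PowerSeries.coeff_mk, coeff_GE]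
  rw [Finset.sum_range_succ' (fun k => Dcoef a x k * charlier (-a) (i - k) (1 - x))]
  rw [Dcoef_zero, zero_mul, add_zero]
  rw [Acoef, ← Finset.Ico_add_one_right_eq_Icc, Finset.sum_Ico_eq_sum_range]
  simp only [Nat.add_sub_cancel]
  refine Finset.sum_congr rfl fun k _ => ?_
  rw [Dcoef]
  rw [show (-x + 1 : ℝ) = 1 - x by ring, show 1 + k = k + 1 by ring]
  ring

lemma Ssum (a x w : ℝ) (n : ℕ) :
    ∑ i ∈ Finset.range (n + 1), Acoef a i x * charlier a (n - i) w =
      PowerSeries.coeff n (Dser a x * Gs (1 - x + w)) := by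
  have hprod : Dser a x * (Gs (1 - x) * Es (-a)) * (Gs w * Es a) = Dser a x * Gs (1 - x + w) := by
    rw [Gs_add (1 - x) w]
    have h1 : Es (-a) * Es a = 1 := by
      rw [← Es_add, show (-a) + a = 0 by ring, Es_zero]
    calc Dser a x * (Gs (1 - x) * Es (-a)) * (Gs w * Es a)
        = Dser a x * (Gs (1 - x) * Gs w) * (Es (-a) * Es a) := by ring
      _ = Dser a x * (Gs (1 - x) * Gs w) := by rw [h1, mul_one]
  rw [← hprod, PowerSeries.coeff_mul, Finset.Nat.sum_antidiagonal_eq_sum_range_succ_mk]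
  refine Finset.sum_congr rfl fun i _ => ?_
  rw [← Acoef_eq, coeff_GE]

lemma Ssum_x1 (a x : ℝ) (n : ℕ) :
    ∑ i ∈ Finset.range (n + 1), Acoef a i x * charlier a (n - i) (x - 1) = Dcoef a x n := by
  rw [Ssum, show (1 - x + (x - 1) : ℝ) = 0 by ring, Gs_zero, mul_one]
  simp [Dser]

lemma Ssum_x (a x : ℝ) (m : ℕ) :
    ∑ i ∈ Finset.range (m + 2), Acoef a i x * charlier a (m + 1 - i) x =
      Dcoef a x (m + 1) + Dcoef a x m := by
  rw [show m + 2 = (m + 1) + 1 by rfl, Ssum, show (1 - x + x : ℝ) = 1 by ring, Gs_one]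
  rw [mul_add, mul_one, map_add, PowerSeries.coeff_succ_mul_X]
  simp [Dser]

lemma charlier_CE (a : ℝ) (n : ℕ) (x : ℝ) :
    a * charlier a n (x + 1) - (x + a - n) * charlier a n x + x * charlier a n (x - 1) = 0 := by
  match n with
  | 0 =>
    simp only [charlier_zero_n, Nat.cast_zero]
    ring
  | (m+1) =>
    have h1 := charlier_struct a m x
    have h2 := charlier_fd a m x
    have h3 := charlier_fd a m (x - 1)
    rw [show (x - 1 + 1 : ℝ) = x by ring] at h3
    push_cast
    linear_combination a * h2 - x * h3 - h1

lemma fdiff_iter_genCharlier (a N : ℝ) (n : ℕ) : ∀ i, i ≤ n →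
    fdiff^[i] (genCharlier a N n) = fun x =>
      (1 + N * (-1) ^ n * charlier a n (-1)) * charlier a (n - i) x
        - N * (-1) ^ n * charlier a n 0 * charlier a (n - i) (x - 1) := by
  intro i
  induction i with
  | zero =>
    intro _
    funext x
    simp [genCharlier]
  | succ i ih =>
    intro h
    rw [Function.iterate_succ']
    simp only [Function.comp_apply]
    rw [ih (Nat.le_of_succ_le h)]
    funext x
    simp only [fdiff]
    obtain ⟨m, hm⟩ : ∃ m, n - i = m + 1 := ⟨n - (i + 1), by omega⟩
    have hm2 : n - (i + 1) = m := by omega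
    rw [hm, hm2, show (x + 1 - 1 : ℝ) = x by ring]
    have h1 := charlier_fd a m x
    have h2 := charlier_fd a m (x - 1)
    rw [show (x - 1 + 1 : ℝ) = x by ring] at h2
    linear_combination (1 + N * (-1) ^ n * charlier a n (-1)) * h1
      - N * (-1) ^ n * charlier a n 0 * h2


/-- The generalized Charlier polynomial `y = C_n^{a,N}` satisfies
`N ∑_{i=0}^n A_i(x) Δ^i y(x) + x Δ∇y(x) + (a-x) Δy(x) + n y(x) = 0`. -/
theorem genCharlier_difference_equation (a N : ℝ) (ha : 0 < a) (hN : 0 < N) (n : ℕ) (x : ℝ) :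
    N * ∑ i ∈ Finset.range (n + 1),
        (if i = 0 then A0coef a n else Acoef a i x) * fdiff^[i] (genCharlier a N n) x
      + x * fdiff (bdiff (genCharlier a N n)) x
      + (a - x) * fdiff (genCharlier a N n) x
      + (n : ℝ) * genCharlier a N n x = 0 := by
  match n with
  | 0 =>
    have h0 : A0coef a 0 = 0 := by
      rw [A0coef, charlierZ]
      norm_num
    simp [h0, fdiff, bdiff, genCharlier, charlier_zero_n]
  | (m+1) =>
    have hA00 : Acoef a 0 x = 0 := by simp [Acoef]
    have hT0 : ∑ i ∈ Finset.range (m+1), Acoef a (i+1) x * charlier a (m - i) x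
        = Dcoef a x (m+1) + Dcoef a x m := by
      have h := Ssum_x a x m
      rw [Finset.sum_range_succ' (fun i => Acoef a i x * charlier a (m+1-i) x)] at h
      simp only [hA00, zero_mul, add_zero, Nat.succ_sub_succ] at h
      exact h
    have hT1 : ∑ i ∈ Finset.range (m+1), Acoef a (i+1) x * charlier a (m - i) (x-1)
        = Dcoef a x (m+1) := by
      have h := Ssum_x1 a x (m+1)
      rw [Finset.sum_range_succ' (fun i => Acoef a i x * charlier a (m+1-i) (x-1))] at h
      simp only [hA00, zero_mul, add_zero, Nat.succ_sub_succ] at h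
      exact h
    have hF : ∀ i, i ≤ m+1 → fdiff^[i] (genCharlier a N (m+1)) x
        = (1 + N * (-1) ^ (m+1) * charlier a (m+1) (-1)) * charlier a (m+1-i) x
          - N * (-1) ^ (m+1) * charlier a (m+1) 0 * charlier a (m+1-i) (x-1) := by
      intro i hi
      rw [fdiff_iter_genCharlier a N (m+1) i hi]
    have hsum : ∑ i ∈ Finset.range (m+2),
        (if i = 0 then A0coef a (m+1) else Acoef a i x) * fdiff^[i] (genCharlier a N (m+1)) x
        = A0coef a (m+1) * ((1 + N * (-1) ^ (m+1) * charlier a (m+1) (-1)) * charlier a (m+1) x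
            - N * (-1) ^ (m+1) * charlier a (m+1) 0 * charlier a (m+1) (x-1))
          + ((1 + N * (-1) ^ (m+1) * charlier a (m+1) (-1)) * (Dcoef a x (m+1) + Dcoef a x m)
            - N * (-1) ^ (m+1) * charlier a (m+1) 0 * Dcoef a x (m+1)) := by
      rw [Finset.sum_range_succ' (fun i => (if i = 0 then A0coef a (m+1) else Acoef a i x) * fdiff^[i] (genCharlier a N (m+1)) x)]
      simp only [Nat.succ_ne_zero, if_false, if_true]
      have hrw : ∀ i ∈ Finset.range (m+1),
          Acoef a (i+1) x * fdiff^[i+1] (genCharlier a N (m+1)) x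
          = (1 + N * (-1) ^ (m+1) * charlier a (m+1) (-1)) * (Acoef a (i+1) x * charlier a (m-i) x)
            - N * (-1) ^ (m+1) * charlier a (m+1) 0 * (Acoef a (i+1) x * charlier a (m-i) (x-1)) := by
        intro i hi
        have him := Finset.mem_range.1 hi
        rw [hF (i+1) (by omega)]
        have h2 : m + 1 - (i+1) = m - i := by omega
        rw [h2]; ring
      rw [Finset.sum_congr rfl hrw, Finset.sum_sub_distrib, ← Finset.mul_sum, ← Finset.mul_sum,
        hT0, hT1, hF 0 (by omega)]
      simp only [Nat.sub_zero]
      ring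
    rw [hsum]
    simp only [fdiff, bdiff, genCharlier, Dcoef]
    have hA0 : A0coef a (m+1) = (-1:ℝ)^m * charlier a m (-2) := by
      rw [A0coef, charlierZ]
      have h1 : ((m+1:ℕ):ℤ) - 1 = (m:ℤ) := by push_cast; ring
      rw [h1, if_pos (by positivity)]
      simp [zpow_natCast]
    rw [hA0]
    have hv1 : charlier a m (-2) = charlier a (m+1) (-1) - charlier a (m+1) (-2) := by
      have h := charlier_fd a m (-2); rw [show (-2:ℝ)+1 = -1 by ring] at h; linarith
    have hv2 : charlier a m (-1) = charlier a (m+1) 0 - charlier a (m+1) (-1) := by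
      have h := charlier_fd a m (-1); rw [show (-1:ℝ)+1 = 0 by ring] at h; linarith
    have hv3 : charlier a m (x-1) = charlier a (m+1) x - charlier a (m+1) (x-1) := by
      have h := charlier_fd a m (x-1); rw [show (x-1+1:ℝ) = x by ring] at h; linarith
    have hv4 : charlier a m (x-2) = charlier a (m+1) (x-1) - charlier a (m+1) (x-2) := by
      have h := charlier_fd a m (x-2); rw [show (x-2+1:ℝ) = x-1 by ring] at h; linarith
    rw [hv1, hv2, hv3, hv4]
    have hCE1 := charlier_CE a (m+1) x
    have hCE2 := charlier_CE a (m+1) (x-1)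
    rw [show (x-1+1:ℝ) = x by ring, show (x-1-1:ℝ) = x-2 by ring] at hCE2
    rw [show (x+1-1-1:ℝ) = x-1 by ring, show (x+1-1:ℝ) = x by ring,
      show (x-1-1:ℝ) = x-2 by ring]
    push_cast at hCE1 hCE2 ⊢
    linear_combination (1 + N * (-1) ^ (m+1) * charlier a (m+1) (-1)) * hCE1
      - N * (-1) ^ (m+1) * charlier a (m+1) 0 * hCE2
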